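/- Every modal formula of rank n over a modal signature Λ interpreted by monotone-free predicate liftings over the covariant powerset functor — in particular every formula of graded modal logic, whose satisfaction at a state of an ℕ-weighted Kripke frame (X, B : X → X → ℕ with finite support) is given by x ⊨ ◇_k φ iff Σ_{y ⊨ φ} B(x)(y) > k — that is satisfiable in some ℕ-weighted Kripke frame is satisfiable at the root of a finite ℕ-weighted frame whose underlying support graph ({(x,y) | B(x)(y) > 0}) is a tree of depth at most n. -/

import Mathlib

open Classical

/-- Formulas of graded modal logic, with operators `◇_k` for `k ∈ ℕ`. -/
inductive GForm : Type
  | bot : GForm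
  | neg : GForm → GForm
  | and : GForm → GForm → GForm
  | dia : ℕ → GForm → GForm

namespace GForm

/-- Rank: maximal nesting depth of modalities. -/
def rank : GForm → ℕ
  | bot => 0
  | neg φ => rank φ
  | and φ ψ => max (rank φ) (rank ψ)
  | dia _ φ => rank φ + 1

/-- Satisfaction over an ℕ-weighted Kripke frame `B : X → X → ℕ`:
`x ⊨ ◇_k φ` iff the total multiplicity of successors of `x` satisfying `φ`
exceeds `k`. -/
noncomputable def sat {X : Type} (B : X → X → ℕ) : X → GForm → Prop
  | _, bot => False
  | x, neg φ => ¬ sat B x φ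
  | x, and φ ψ => sat B x φ ∧ sat B x ψ
  | x, dia k φ => (∑ᶠ y ∈ {y : X | sat B y φ}, B x y) > k

end GForm

/-- `(X, R)` is a tree with root `root` of depth at most `n`. -/
def IsTreeOfDepth {X : Type} (R : X → X → Prop) (root : X) (n : ℕ) : Prop :=
  ∃ d : X → ℕ, d root = 0 ∧
    (∀ x, Relation.ReflTransGen R root x) ∧
    (∀ x y, R x y → d y = d x + 1) ∧
    (∀ x, d x ≤ n) ∧
    (∀ y, y ≠ root → ∃! x, R x y) ∧
    (∀ x, ¬ R x root)

namespace Shallow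

variable {X : Type}

lemma chain_finite (R : X → X → Prop) (hfin : ∀ a : X, {b | R a b}.Finite) :
    ∀ (n : ℕ) (x : X), {t : List X | List.Chain R x t ∧ t.length ≤ n}.Finite := by
  intro n
  induction n with
  | zero =>
    intro x
    apply Set.Finite.subset (Set.finite_singleton ([] : List X))
    rintro t ⟨-, hl⟩
    simpa using List.length_eq_zero_iff.mp (Nat.le_zero.mp hl)
  | succ n ih =>
    intro x
    apply Set.Finite.subset
      (Set.Finite.insert ([] : List X)
        ((hfin x).biUnion (fun y _ => (ih y).image (List.cons y))))
    rintro t ⟨hc, hl⟩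
    cases t with
    | nil => exact Set.mem_insert _ _
    | cons y t' =>
      rcases List.chain_cons.mp hc with ⟨hxy, hc'⟩
      exact Set.mem_insert_iff.mpr (Or.inr (Set.mem_biUnion hxy
        ⟨t', ⟨hc', by simpa using hl⟩, rfl⟩))

lemma chain_concat (R : X → X → Prop) :
    ∀ (t : List X) (x y : X),
      List.Chain R x (t ++ [y]) ↔
        List.Chain R x t ∧ R ((x :: t).getLast (List.cons_ne_nil _ _)) y := by
  intro t
  induction t with
  | nil => intro x y; simp [List.Chain]
  | cons a t ih =>
    intro x y
    simp only [List.Chain] at ih ⊢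
    simp only [List.cons_append, List.chain_cons, ih a y, List.getLast_cons_cons]
    tauto

/-- Set of paths (recorded as the list of states after the root). -/
def PathSet (B : X → X → ℕ) (x0 : X) (n : ℕ) : Set (List X) :=
  {t | List.Chain (fun a b => 0 < B a b) x0 t ∧ t.length ≤ n}

/-- Last state of a path. -/
def lastOf (x0 : X) (l : List X) : X := (x0 :: l).getLast (List.cons_ne_nil _ _)

lemma lastOf_nil (x0 : X) : lastOf x0 [] = x0 := rfl

lemma lastOf_concat (x0 : X) (t : List X) (y : X) : lastOf x0 (t ++ [y]) = y := by
  have h : (x0 :: (t ++ [y])) = (x0 :: t) ++ [y] := rfl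
  simp only [lastOf]
  rw [List.getLast_congr _ _ h]
  exact List.getLast_append_singleton _

lemma lastOf_eq_getLast (x0 : X) (l : List X) (h : l ≠ []) :
    lastOf x0 l = l.getLast h := List.getLast_cons h

/-- The transition structure on the path tree. -/
noncomputable def TB (B : X → X → ℕ) (x0 : X) (n : ℕ)
    (p q : PathSet B x0 n) : ℕ :=
  if (q : List X).dropLast = (p : List X) ∧ (q : List X) ≠ [] then
    B (lastOf x0 p) (lastOf x0 q) else 0

variable (B : X → X → ℕ) (x0 : X) (n : ℕ)

lemma nil_mem : ([] : List X) ∈ PathSet B x0 n :=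
  ⟨List.Chain.nil, by simp⟩

lemma concat_mem {t : List X} (ht : t ∈ PathSet B x0 n) (hlen : t.length < n)
    {y : X} (hy : 0 < B (lastOf x0 t) y) : t ++ [y] ∈ PathSet B x0 n := by
  refine ⟨(chain_concat _ t x0 y).mpr ⟨ht.1, hy⟩, by simpa using hlen⟩

lemma drop_mem {t : List X} (ht : t ∈ PathSet B x0 n) (hne : t ≠ []) :
    t.dropLast ∈ PathSet B x0 n ∧ 0 < B (lastOf x0 t.dropLast) (lastOf x0 t) := by
  have hrec : t.dropLast ++ [t.getLast hne] = t := List.dropLast_append_getLast hne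
  have hc := ht.1
  rw [← hrec] at hc
  rcases (chain_concat _ t.dropLast x0 (t.getLast hne)).mp hc with ⟨hc1, hc2⟩
  refine ⟨⟨hc1, le_trans ?_ ht.2⟩, ?_⟩
  · simpa using (List.length_dropLast t ▸ Nat.sub_le t.length 1)
  · rw [lastOf_eq_getLast x0 t hne]
    exact hc2

lemma TB_pos {p q : PathSet B x0 n} (h : 0 < TB B x0 n p q) :
    (q : List X).dropLast = (p : List X) ∧ (q : List X) ≠ [] ∧
      TB B x0 n p q = B (lastOf x0 p) (lastOf x0 q) := by
  by_cases hc : (q : List X).dropLast = (p : List X) ∧ (q : List X) ≠ []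
  · exact ⟨hc.1, hc.2, if_pos hc⟩
  · rw [TB, if_neg hc] at h; omega

lemma sat_iff (hfin : ∀ y : X, (Function.support (B y)).Finite) :
    ∀ (ψ : GForm) (p : PathSet B x0 n),
      (p : List X).length + ψ.rank ≤ n →
      (GForm.sat (TB B x0 n) p ψ ↔ GForm.sat B (lastOf x0 p) ψ) := by
  intro ψ
  induction ψ with
  | bot => intro p _; exact Iff.rfl
  | neg ψ ih =>
    intro p hp
    exact not_congr (ih p hp)
  | and ψ₁ ψ₂ ih₁ ih₂ =>
    intro p hp
    simp only [GForm.rank] at hp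
    exact and_congr (ih₁ p (by omega)) (ih₂ p (by omega))
  | dia k ψ ih =>
    intro p hp
    simp only [GForm.rank] at hp
    have hlen : (p : List X).length < n := by omega
    set l := lastOf x0 p with hl
    -- the sums agree
    have key : (∑ᶠ y ∈ {y : X | GForm.sat B y ψ}, B l y) =
        (∑ᶠ q ∈ {q : PathSet B x0 n | GForm.sat (TB B x0 n) q ψ}, TB B x0 n p q) := by
      rw [← finsum_mem_inter_support (B l), ← finsum_mem_inter_support (TB B x0 n p)]
      set e : X → PathSet B x0 n := fun y =>
        if h : ((p : List X) ++ [y]) ∈ PathSet B x0 n then ⟨_, h⟩ else p with he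
      have hval : ∀ y : X, 0 < B l y → ((e y : List X) = (p : List X) ++ [y]) := by
        intro y hy
        have hm : ((p : List X) ++ [y]) ∈ PathSet B x0 n :=
          concat_mem B x0 n p.2 hlen (hl ▸ hy)
        simp [he, hm]
      refine finsum_mem_eq_of_bijOn e ?_ ?_
      · constructor
        · -- MapsTo
          rintro y ⟨hy1, hy2⟩
          rw [Function.mem_support] at hy2
          have hy2' : 0 < B l y := Nat.pos_of_ne_zero hy2
          have hv := hval y hy2'
          have hTB : TB B x0 n p (e y) = B l y := by
            rw [TB, if_pos ⟨by rw [hv]; exact List.dropLast_concat, by rw [hv]; simp⟩]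
            rw [hv, lastOf_concat, hl]
          constructor
          · show GForm.sat (TB B x0 n) (e y) ψ
            rw [ih (e y) (by rw [hv]; simp; omega)]
            rw [hv, lastOf_concat]
            exact hy1
          · rw [Function.mem_support, hTB]
            exact hy2
        constructor
        · -- InjOn
          rintro y1 ⟨-, hy1⟩ y2 ⟨-, hy2⟩ hee
          rw [Function.mem_support] at hy1 hy2
          have h1 := hval y1 (Nat.pos_of_ne_zero hy1)
          have h2 := hval y2 (Nat.pos_of_ne_zero hy2)
          have : (p : List X) ++ [y1] = (p : List X) ++ [y2] := by
            rw [← h1, ← h2, hee]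
          simpa using this
        · -- SurjOn
          rintro q ⟨hq1, hq2⟩
          rw [Function.mem_support] at hq2
          obtain ⟨hdrop, hne, heq⟩ := TB_pos B x0 n (Nat.pos_of_ne_zero hq2)
          set y := lastOf x0 (q : List X) with hy
          have hqval : (q : List X) = (p : List X) ++ [y] := by
            rw [hy, lastOf_eq_getLast x0 _ hne, ← hdrop]
            exact (List.dropLast_append_getLast hne).symm
          have hBy : 0 < B l y := by
            rw [heq] at hq2; exact Nat.pos_of_ne_zero hq2
          refine ⟨y, ⟨?_, Function.mem_support.mpr (Nat.pos_iff_ne_zero.mp hBy)⟩, ?_⟩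
          · show GForm.sat B y ψ
            have := ih q (by rw [hqval]; simp; omega)
            rw [hqval, lastOf_concat] at this
            exact this.mp hq1
          · have := hval y hBy
            apply Subtype.ext
            rw [this, hqval]
      · -- value agreement
        rintro y ⟨-, hy⟩
        rw [Function.mem_support] at hy
        have hv := hval y (Nat.pos_of_ne_zero hy)
        rw [TB, if_pos ⟨by rw [hv]; exact List.dropLast_concat, by rw [hv]; simp⟩]
        rw [hv, lastOf_concat, hl]
    show (_ > k) ↔ (_ > k)
    rw [key]

end Shallow

theorem stmt19 (φ : GForm)
    (hsat : ∃ (X : Type) (B : X → X → ℕ) (x : X),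
      (∀ y : X, (Function.support (B y)).Finite) ∧ GForm.sat B x φ) :
    ∃ (X : Type) (_ : Fintype X) (B : X → X → ℕ) (root : X),
      GForm.sat B root φ ∧
      IsTreeOfDepth (fun x y => B x y > 0) root (GForm.rank φ) := by
  obtain ⟨X, B, x0, hfin, hx0⟩ := hsat
  set n := φ.rank with hn
  have hPfin : (Shallow.PathSet B x0 n).Finite := by
    apply Shallow.chain_finite (fun a b => 0 < B a b) (fun a => (hfin a).subset ?_) n x0
    intro b hb
    exact Function.mem_support.mpr (Nat.pos_iff_ne_zero.mp hb)
  refine ⟨Shallow.PathSet B x0 n, hPfin.fintype, Shallow.TB B x0 n,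
    ⟨[], Shallow.nil_mem B x0 n⟩, ?_, ?_⟩
  · rw [Shallow.sat_iff B x0 n hfin φ _ (by simp [n])]
    exact hx0
  · refine ⟨fun p => (p : List X).length, rfl, ?_, ?_, ?_, ?_, ?_⟩
    · -- reachability
      intro q
      have : ∀ (m : ℕ) (q : Shallow.PathSet B x0 n), (q : List X).length ≤ m →
          Relation.ReflTransGen (fun p q => Shallow.TB B x0 n p q > 0)
            ⟨[], Shallow.nil_mem B x0 n⟩ q := by
        intro m
        induction m with
        | zero =>
          intro q hq
          have : (q : List X) = [] := List.length_eq_zero_iff.mp (Nat.le_zero.mp hq)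
          rw [show q = ⟨[], Shallow.nil_mem B x0 n⟩ from Subtype.ext this]
        | succ m ih =>
          intro q hq
          by_cases hne : (q : List X) = []
          · rw [show q = ⟨[], Shallow.nil_mem B x0 n⟩ from Subtype.ext hne]
          · obtain ⟨hmem, hpos⟩ := Shallow.drop_mem B x0 n q.2 hne
            refine Relation.ReflTransGen.tail (ih ⟨_, hmem⟩ ?_) ?_
            · have h1 : 0 < (q : List X).length := List.length_pos_iff.mpr hne
              simp only [List.length_dropLast]
              omega
            · show 0 < Shallow.TB B x0 n ⟨_, hmem⟩ q
              rw [Shallow.TB, if_pos ⟨rfl, hne⟩]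
              exact hpos
      exact this (q : List X).length q le_rfl
    · -- depth increment
      intro p q hpq
      obtain ⟨hdrop, hne, -⟩ := Shallow.TB_pos B x0 n hpq
      have h1 : 0 < (q : List X).length := List.length_pos_iff.mpr hne
      have h2 := @List.length_dropLast _ (q : List X)
      rw [hdrop] at h2
      show (q : List X).length = (p : List X).length + 1
      omega
    · -- depth bound
      intro p; exact p.2.2
    · -- unique predecessor
      intro q hq
      have hne : (q : List X) ≠ [] := fun h => hq (Subtype.ext h)
      obtain ⟨hmem, hpos⟩ := Shallow.drop_mem B x0 n q.2 hne
      refine ⟨⟨_, hmem⟩, ?_, ?_⟩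
      · show 0 < Shallow.TB B x0 n ⟨_, hmem⟩ q
        rw [Shallow.TB, if_pos ⟨rfl, hne⟩]
        exact hpos
      · intro p hp
        obtain ⟨hdrop, -, -⟩ := Shallow.TB_pos B x0 n hp
        exact Subtype.ext hdrop.symm
    · -- nothing into root
      intro p hp
      obtain ⟨-, hne, -⟩ := Shallow.TB_pos B x0 n hp
      exact hne rfl
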